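/- Let R_+ := {(a,b) : 1 ≤ a < b ≤ n}. For d_1,…,d_n ∈ K^× and m : R_+ → K^×, let t_R(d,m) be the diagonal n×n matrix whose (n+1−j, n+1−j) entry is d_j·(Π_{l=1}^{j−1} m_{(l,j)})/(Π_{l=j+1}^{n} m_{(j,l)}) for j = 1,…,n. For a reduced expression i = (i_1,…,i_N) for w_0, with partial products w_{(r)} := σ_{i_1}∘⋯∘σ_{i_r} (functions composed with the rightmost factor applied first), define the positive-root sequence α^i_r ∈ R_+ for r = 1,…,N as the increasingly ordered pair {w_{(r−1)}(i_r), w_{(r−1)}(i_r+1)}. Suppose i and i' are reduced expressions for w_0 with i'_r = i_r for all r ∉ {k−1, k, k+1}, and (i_{k−1}, i_k, i_{k+1}) = (c,e,c), (i'_{k−1}, i'_k, i'_{k+1}) = (e,c,e) for some c, e with |c − e| = 1. Put α := α^i_{k−1}, β := α^i_{k+1}, γ := α^i_k. Let m' : R_+ → K^× with m'_α + m'_β ≠ 0, and define m'' : R_+ → K^× by m''_α := m'_γ·(m'_α + m'_β)/m'_β, m''_γ := m'_α·m'_β/(m'_α + m'_β), m''_β := m'_γ·(m'_α + m'_β)/m'_α,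 and m''_ρ := m'_ρ for all other ρ ∈ R_+. Then y_{i_1}(1/m'_{α^i_1})⋯y_{i_N}(1/m'_{α^i_N}) = y_{i'_1}(1/m''_{α^{i'}_1})⋯y_{i'_N}(1/m''_{α^{i'}_N}), and t_R(d, m'') = t_R(d, m') for every d ∈ (K^×)^n. -/

import Mathlib

open Matrix

noncomputable section

variable {K : Type*} [Field K]

/-- `x_i(z)`: identity except entry `z` in (1-based) position `(i, i+1)`. -/
def xMat (n i : ℕ) (z : K) : Matrix (Fin n) (Fin n) K :=
  Matrix.of fun a b => if (a : ℕ) = (b : ℕ) then 1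
    else if (a : ℕ) + 1 = i ∧ (b : ℕ) = i then z else 0

/-- `y_i(z)`: identity except entry `z` in (1-based) position `(i+1, i)`. -/
def yMat (n i : ℕ) (z : K) : Matrix (Fin n) (Fin n) K :=
  Matrix.of fun a b => if (a : ℕ) = (b : ℕ) then 1
    else if (a : ℕ) = i ∧ (b : ℕ) + 1 = i then z else 0

/-- `x_{-i}(z)`: identity except the 2×2 submatrix in (1-based) rows/columns `i, i+1`
is `((z⁻¹, 0), (1, z))`. -/
def xnegMat (n i : ℕ) (z : K) : Matrix (Fin n) (Fin n) K :=
  Matrix.of fun a b =>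
    if (a : ℕ) + 1 = i ∧ (b : ℕ) + 1 = i then z⁻¹
    else if (a : ℕ) = i ∧ (b : ℕ) = i then z
    else if (a : ℕ) = i ∧ (b : ℕ) + 1 = i then 1
    else if (a : ℕ) = (b : ℕ) then 1
    else 0

/-- `s̄_i := x_i(-1) · y_i(1) · x_i(-1)`. -/
def sbar (n i : ℕ) : Matrix (Fin n) (Fin n) K :=
  xMat n i (-1) * yMat n i 1 * xMat n i (-1)

/-- The reduced expression `i₀ = (1,2,…,n-1, 1,2,…,n-2, …, 1,2, 1)` for `w₀`. -/
def i0List (n : ℕ) : List ℕ :=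
  ((List.range (n - 1)).map fun j => List.range' 1 (n - 1 - j)).foldr (· ++ ·) []

/-- The reduced expression `i₀' = (n-1,…,1, n-1,…,2, …, n-1,n-2, n-1)` for `w₀`. -/
def i0'List (n : ℕ) : List ℕ :=
  ((List.range (n - 1)).map fun j => (List.range' (1 + j) (n - 1 - j)).reverse).foldr (· ++ ·) []

/-- The matrix `w̄₀ = s̄_{i_1} ⋯ s̄_{i_N}` (computed along `i₀`; it is independent of the
choice of reduced expression). -/
def w0Mat (n : ℕ) : Matrix (Fin n) (Fin n) K :=
  ((i0List n).map fun i => sbar n i).prod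

/-- `x_{-i_1}(z_1) ⋯ x_{-i_N}(z_N)` along the word `l` (with 1-based coordinates `z`). -/
def xnegProd (n : ℕ) (l : List ℕ) (z : ℕ → K) : Matrix (Fin n) (Fin n) K :=
  ((List.range l.length).map fun r => xnegMat n (l.getD r 0) (z (r + 1))).prod

/-- `x_{i_1}(p_1) ⋯ x_{i_N}(p_N)` along the word `l`. -/
def xProd (n : ℕ) (l : List ℕ) (p : ℕ → K) : Matrix (Fin n) (Fin n) K :=
  ((List.range l.length).map fun r => xMat n (l.getD r 0) (p (r + 1))).prod

/-- `y_{i_1}(q_1) ⋯ y_{i_N}(q_N)` along the word `l`. -/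
def yProd (n : ℕ) (l : List ℕ) (q : ℕ → K) : Matrix (Fin n) (Fin n) K :=
  ((List.range l.length).map fun r => yMat n (l.getD r 0) (q (r + 1))).prod

/-- The adjacent transposition `σ_i` (swapping `i` and `i+1`), as a function on `ℕ`. -/
def sigmaFun (i : ℕ) : ℕ → ℕ := fun k => if k = i then i + 1 else if k = i + 1 then i else k

/-- `σ_{i_1} ∘ σ_{i_2} ∘ ⋯ ∘ σ_{i_N}` (rightmost factor applied first). -/
def wordPerm (l : List ℕ) : ℕ → ℕ := l.foldr (fun i f => sigmaFun i ∘ f) id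

/-- A reduced expression for the longest element `w₀` of `Sₙ`. -/
def IsReducedWord (n : ℕ) (l : List ℕ) : Prop :=
  l.length = n * (n - 1) / 2 ∧ (∀ i ∈ l, 1 ≤ i ∧ i ≤ n - 1) ∧
    ∀ k, 1 ≤ k → k ≤ n → wordPerm l k = n + 1 - k

/-- Lower unitriangular. -/
def IsLowerUni {n : ℕ} (M : Matrix (Fin n) (Fin n) K) : Prop :=
  (∀ i, M i i = 1) ∧ ∀ i j : Fin n, i < j → M i j = 0

/-- Upper unitriangular. -/
def IsUpperUni {n : ℕ} (M : Matrix (Fin n) (Fin n) K) : Prop :=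
  (∀ i, M i i = 1) ∧ ∀ i j : Fin n, j < i → M i j = 0

/-- `s_k := Σ_{j=1}^{k-1} (n - j)`. -/
def sIdx (n k : ℕ) : ℕ := ∑ j ∈ Finset.range (k - 1), (n - (j + 1))

/-- The positive root `α^i_r` attached to the `r`-th letter (1-based) of the word `l`:
the increasingly ordered pair `{w_{(r-1)}(i_r), w_{(r-1)}(i_r + 1)}`. -/
def rootSeq (l : List ℕ) (r : ℕ) : ℕ × ℕ :=
  (min (wordPerm (l.take (r - 1)) (l.getD (r - 1) 0))
      (wordPerm (l.take (r - 1)) (l.getD (r - 1) 0 + 1)),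
   max (wordPerm (l.take (r - 1)) (l.getD (r - 1) 0))
      (wordPerm (l.take (r - 1)) (l.getD (r - 1) 0 + 1)))

/-- `y_{i_1}(1/m_{α^i_1}) ⋯ y_{i_N}(1/m_{α^i_N})` along the word `l`, with coordinates
indexed by positive roots. -/
def yProdRoots (n : ℕ) (l : List ℕ) (m : ℕ × ℕ → K) : Matrix (Fin n) (Fin n) K :=
  ((List.range l.length).map fun r => yMat n (l.getD r 0) (m (rootSeq l (r + 1)))⁻¹).prod

/-- The universal weight matrix `t_R(d, m)`: the diagonal matrix whose (1-based) entry in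
position `(n+1-j, n+1-j)` is `d_j · (Π_{l<j} m_{(l,j)}) / (Π_{l>j} m_{(j,l)})`. -/
def tR (n : ℕ) (d : ℕ → K) (m : ℕ × ℕ → K) : Matrix (Fin n) (Fin n) K :=
  Matrix.diagonal fun a : Fin n =>
    d (n - (a : ℕ)) * (∏ l ∈ Finset.Icc 1 (n - (a : ℕ) - 1), m (l, n - (a : ℕ))) /
      ∏ l ∈ Finset.Icc (n - (a : ℕ) + 1) n, m (n - (a : ℕ), l)


/-! ### Basic facts about `sigmaFun` and `wordPerm` -/

lemma sigmaFun_sigmaFun (i x : ℕ) : sigmaFun i (sigmaFun i x) = x := by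
  simp only [sigmaFun]; split_ifs <;> omega

lemma wordPerm_nil : wordPerm [] = id := rfl

lemma wordPerm_cons (a : ℕ) (l : List ℕ) :
    wordPerm (a :: l) = sigmaFun a ∘ wordPerm l := rfl

lemma wordPerm_append (l₁ l₂ : List ℕ) :
    wordPerm (l₁ ++ l₂) = wordPerm l₁ ∘ wordPerm l₂ := by
  induction l₁ with
  | nil => rfl
  | cons a t ih => simp [wordPerm_cons, ih, Function.comp_assoc, List.cons_append]

lemma wordPerm_singleton (a : ℕ) : wordPerm [a] = sigmaFun a := by
  funext x; rfl

lemma wordPerm_reverse_apply (l : List ℕ) (x : ℕ) :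
    wordPerm l.reverse (wordPerm l x) = x := by
  induction l generalizing x with
  | nil => rfl
  | cons a t ih =>
      simp only [List.reverse_cons, wordPerm_append, wordPerm_cons, wordPerm_nil,
        Function.comp_apply, id_eq]
      rw [sigmaFun_sigmaFun, ih]

lemma wordPerm_apply_reverse (l : List ℕ) (x : ℕ) :
    wordPerm l (wordPerm l.reverse x) = x := by
  have := wordPerm_reverse_apply l.reverse x
  rwa [List.reverse_reverse] at this

lemma sigmaFun_bounds {n i x : ℕ} (h1 : 1 ≤ i) (h2 : i + 1 ≤ n) (hx1 : 1 ≤ x) (hx2 : x ≤ n) :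
    1 ≤ sigmaFun i x ∧ sigmaFun i x ≤ n := by
  simp only [sigmaFun]; split_ifs <;> omega

lemma wordPerm_bounds {n : ℕ} {l : List ℕ} (hl : ∀ j ∈ l, 1 ≤ j ∧ j ≤ n - 1)
    (hn : 2 ≤ n) {x : ℕ} (hx1 : 1 ≤ x) (hx2 : x ≤ n) :
    1 ≤ wordPerm l x ∧ wordPerm l x ≤ n := by
  induction l generalizing x with
  | nil => exact ⟨hx1, hx2⟩
  | cons a t ih =>
      have ha := hl a (List.mem_cons_self)
      have ht := ih (fun j hj => hl j (List.mem_cons_of_mem a hj)) hx1 hx2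
      exact sigmaFun_bounds (by omega) (by omega) ht.1 ht.2

/-! ### Inversion sets -/

/-- All pairs `(a,b)` with `1 ≤ a < b ≤ n`. -/
def pairsSet (n : ℕ) : Finset (ℕ × ℕ) :=
  (Finset.Icc 1 n ×ˢ Finset.Icc 1 n).filter fun p => p.1 < p.2

/-- Inversions of the permutation whose *inverse* is `v`. -/
def InvSet (n : ℕ) (v : ℕ → ℕ) : Finset (ℕ × ℕ) :=
  (Finset.Icc 1 n ×ˢ Finset.Icc 1 n).filter fun p => p.1 < p.2 ∧ v p.2 < v p.1

lemma mem_pairsSet {n : ℕ} {p : ℕ × ℕ} :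
    p ∈ pairsSet n ↔ (1 ≤ p.1 ∧ p.1 ≤ n) ∧ (1 ≤ p.2 ∧ p.2 ≤ n) ∧ p.1 < p.2 := by
  simp [pairsSet, Finset.mem_filter, Finset.mem_product, and_assoc]

lemma mem_InvSet {n : ℕ} {v : ℕ → ℕ} {p : ℕ × ℕ} :
    p ∈ InvSet n v ↔ (1 ≤ p.1 ∧ p.1 ≤ n) ∧ (1 ≤ p.2 ∧ p.2 ≤ n) ∧ p.1 < p.2 ∧ v p.2 < v p.1 := by
  simp [InvSet, Finset.mem_filter, Finset.mem_product, and_assoc]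

lemma InvSet_subset_pairsSet (n : ℕ) (v : ℕ → ℕ) : InvSet n v ⊆ pairsSet n := by
  intro p hp
  rw [mem_InvSet] at hp
  rw [mem_pairsSet]
  tauto

lemma InvSet_id (n : ℕ) : InvSet n id = ∅ := by
  ext p
  simp only [mem_InvSet, Finset.notMem_empty, iff_false, id_eq]
  omega

lemma InvSet_full {n : ℕ} {v : ℕ → ℕ} (hv : ∀ k, 1 ≤ k → k ≤ n → v k = n + 1 - k) :
    InvSet n v = pairsSet n := by
  ext p
  rw [mem_InvSet, mem_pairsSet]
  constructor
  · tauto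
  · rintro ⟨h1, h2, h3⟩
    refine ⟨h1, h2, h3, ?_⟩
    rw [hv p.1 h1.1 h1.2, hv p.2 h2.1 h2.2]
    omega

lemma pairsSet_card (n : ℕ) : (pairsSet n).card = n * (n - 1) / 2 := by
  induction n with
  | zero => decide
  | succ n ih =>
      have hsplit : pairsSet (n + 1) =
          pairsSet n ∪ (Finset.Icc 1 n).image (fun a => (a, n + 1)) := by
        ext p
        simp only [Finset.mem_union, Finset.mem_image, mem_pairsSet, Finset.mem_Icc]
        constructor
        · rintro ⟨h1, h2, h3⟩
          by_cases hp : p.2 = n + 1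
          · exact Or.inr ⟨p.1, by omega, by rw [← hp]⟩
          · exact Or.inl ⟨by omega, by omega, h3⟩
        · rintro (⟨h1, h2, h3⟩ | ⟨a, ha, rfl⟩) <;> simp_all <;> omega
      have hdisj : Disjoint (pairsSet n) ((Finset.Icc 1 n).image (fun a => (a, n + 1))) := by
        rw [Finset.disjoint_left]
        rintro p hp hp2
        rw [mem_pairsSet] at hp
        simp only [Finset.mem_image, Finset.mem_Icc] at hp2
        obtain ⟨a, ha, rfl⟩ := hp2
        omega
      have hinj : Set.InjOn (fun a => (a, n + 1)) ((Finset.Icc 1 n : Finset ℕ) : Set ℕ) := by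
        intro a _ b _ h
        simpa using h
      rw [hsplit, Finset.card_union_of_disjoint hdisj, Finset.card_image_of_injOn hinj, ih,
        Nat.card_Icc]
      rcases n with _ | m
      · decide
      · have e0 : (m + 1) * (m + 1 - 1) = m * (m + 1) := by
          simp only [Nat.add_sub_cancel]; ring
        have e1 : (m + 1 + 1) * (m + 1 + 1 - 1) = m * (m + 1) + 2 * (m + 1) := by
          simp only [Nat.add_sub_cancel]; ring
        have e2 := Nat.even_iff.mp (Nat.even_mul_succ_self m)
        rw [e0, e1]
        obtain ⟨a, ha⟩ : ∃ a, m * (m + 1) = a := ⟨_, rfl⟩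
        rw [ha] at e2 ⊢
        omega

lemma sigmaFun_lt_iff {i x y : ℕ} (h1 : ¬(x = i ∧ y = i + 1)) (h2 : ¬(x = i + 1 ∧ y = i)) :
    sigmaFun i y < sigmaFun i x ↔ y < x := by
  simp only [sigmaFun]; split_ifs <;> omega

/-- Key step lemma: multiplying on the right by `σ_i` in the ascent case inserts exactly
one new inversion. -/
lemma InvSet_step {n i : ℕ} {w v : ℕ → ℕ} (hvw : ∀ x, v (w x) = x) (hwv : ∀ x, w (v x) = x)
    (hw : ∀ x, 1 ≤ x → x ≤ n → 1 ≤ w x ∧ w x ≤ n)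
    (hi : 1 ≤ i) (hin : i + 1 ≤ n) (hasc : w i < w (i + 1)) :
    (w i, w (i + 1)) ∉ InvSet n v ∧
      InvSet n (sigmaFun i ∘ v) = insert (w i, w (i + 1)) (InvSet n v) := by
  have hwi := hw i hi (by omega)
  have hwi1 := hw (i + 1) (by omega) hin
  constructor
  · rw [mem_InvSet]
    simp only [hvw]
    omega
  · ext p
    rw [Finset.mem_insert, mem_InvSet, mem_InvSet]
    by_cases hp : p = (w i, w (i + 1))
    · subst hp
      simp only [Function.comp_apply, hvw]
      constructor
      · intro _; exact Or.inl trivial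
      · intro _
        refine ⟨⟨hwi.1, hwi.2⟩, ⟨hwi1.1, hwi1.2⟩, hasc, ?_⟩
        simp only [sigmaFun]
        split_ifs <;> omega
    · have key : ∀ (h1 : 1 ≤ p.1 ∧ p.1 ≤ n) (h2 : 1 ≤ p.2 ∧ p.2 ≤ n), p.1 < p.2 →
          (sigmaFun i (v p.2) < sigmaFun i (v p.1) ↔ v p.2 < v p.1) := by
        intro h1 h2 h12
        apply sigmaFun_lt_iff
        · rintro ⟨ha, hb⟩
          apply hp
          have : p.1 = w i := by rw [← ha, hwv]
          have : p.2 = w (i + 1) := by rw [← hb, hwv]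
          exact Prod.ext (by rw [← ha, hwv]) (by rw [← hb, hwv])
        · rintro ⟨ha, hb⟩
          have e1 : p.1 = w (i + 1) := by rw [← ha, hwv]
          have e2 : p.2 = w i := by rw [← hb, hwv]
          omega
      constructor
      · rintro ⟨h1, h2, h12, hlt⟩
        simp only [Function.comp_apply] at hlt
        rw [key h1 h2 h12] at hlt
        exact Or.inr ⟨h1, h2, h12, hlt⟩
      · rintro (h | ⟨h1, h2, h12, hlt⟩)
        · exact absurd h hp
        · exact ⟨h1, h2, h12, by simp only [Function.comp_apply]; rw [key h1 h2 h12]; exact hlt⟩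

/-! ### The inversion chain of a reduced word -/

lemma take_succ_getD {l : List ℕ} {r : ℕ} (h : r < l.length) :
    l.take (r + 1) = l.take r ++ [l.getD r 0] := by
  rw [List.take_succ, List.getElem?_eq_getElem h, List.getD_eq_getElem l 0 h]
  rfl

lemma vtake_succ {l : List ℕ} {r : ℕ} (h : r < l.length) :
    wordPerm ((l.take (r + 1)).reverse) =
      sigmaFun (l.getD r 0) ∘ wordPerm ((l.take r).reverse) := by
  rw [take_succ_getD h, List.reverse_append, List.reverse_singleton, List.singleton_append,
    wordPerm_cons]

lemma wtake_succ {l : List ℕ} {r : ℕ} (h : r < l.length) :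
    wordPerm (l.take (r + 1)) = wordPerm (l.take r) ∘ sigmaFun (l.getD r 0) := by
  rw [take_succ_getD h, wordPerm_append, wordPerm_singleton]

lemma getD_mem {l : List ℕ} {r : ℕ} (h : r < l.length) : l.getD r 0 ∈ l := by
  rw [List.getD_eq_getElem l 0 h]
  exact List.getElem_mem h

lemma reduced_chain {n : ℕ} (hn : 2 ≤ n) {l : List ℕ} (hl : IsReducedWord n l) :
    ∀ r < l.length,
      wordPerm (l.take r) (l.getD r 0) < wordPerm (l.take r) (l.getD r 0 + 1) ∧
      (wordPerm (l.take r) (l.getD r 0), wordPerm (l.take r) (l.getD r 0 + 1)) ∉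
        InvSet n (wordPerm ((l.take r).reverse)) ∧
      InvSet n (wordPerm ((l.take (r + 1)).reverse)) =
        insert (wordPerm (l.take r) (l.getD r 0), wordPerm (l.take r) (l.getD r 0 + 1))
          (InvSet n (wordPerm ((l.take r).reverse))) := by
  obtain ⟨hlen, hmem, hperm⟩ := hl
  set N := l.length with hN
  set c : ℕ → ℕ := fun r => (InvSet n (wordPerm ((l.take r).reverse))).card with hc
  -- basic data at each position
  have hletter : ∀ r < N, 1 ≤ l.getD r 0 ∧ l.getD r 0 + 1 ≤ n := by
    intro r hr
    have := hmem _ (getD_mem hr)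
    omega
  have hvw : ∀ r x, wordPerm ((l.take r).reverse) (wordPerm (l.take r) x) = x :=
    fun r x => wordPerm_reverse_apply _ x
  have hwv : ∀ r x, wordPerm (l.take r) (wordPerm ((l.take r).reverse) x) = x :=
    fun r x => wordPerm_apply_reverse _ x
  have hwb : ∀ r x, 1 ≤ x → x ≤ n → 1 ≤ wordPerm (l.take r) x ∧ wordPerm (l.take r) x ≤ n := by
    intro r x hx1 hx2
    exact wordPerm_bounds (fun j hj => hmem j (List.mem_of_mem_take hj)) hn hx1 hx2
  -- dichotomy
  have dich : ∀ r < N,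
      (wordPerm (l.take r) (l.getD r 0) < wordPerm (l.take r) (l.getD r 0 + 1) ∧
       (wordPerm (l.take r) (l.getD r 0), wordPerm (l.take r) (l.getD r 0 + 1)) ∉
         InvSet n (wordPerm ((l.take r).reverse)) ∧
       InvSet n (wordPerm ((l.take (r + 1)).reverse)) =
         insert (wordPerm (l.take r) (l.getD r 0), wordPerm (l.take r) (l.getD r 0 + 1))
           (InvSet n (wordPerm ((l.take r).reverse))) ∧
       c (r + 1) = c r + 1) ∨ c r = c (r + 1) + 1 := by
    intro r hr
    set a := l.getD r 0 with ha
    set w := wordPerm (l.take r) with hw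
    set v := wordPerm ((l.take r).reverse) with hv
    have hla := hletter r hr
    have hne : w a ≠ w (a + 1) := by
      intro h
      have := congrArg v h
      simp only [hv, hw, hvw r] at this
      omega
    rcases lt_or_gt_of_ne hne with hasc | hdesc
    · left
      obtain ⟨h1, h2⟩ := InvSet_step (hvw r) (hwv r) (hwb r) hla.1 (by omega) hasc
      rw [← vtake_succ hr] at h2
      refine ⟨hasc, h1, h2, ?_⟩
      rw [hc]
      simp only
      rw [h2, Finset.card_insert_of_notMem h1]
    · right
      have hvw' : ∀ x, (sigmaFun a ∘ v) ((w ∘ sigmaFun a) x) = x := by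
        intro x
        simp only [Function.comp_apply, hv, hw, hvw r, sigmaFun_sigmaFun]
      have hwv' : ∀ x, (w ∘ sigmaFun a) ((sigmaFun a ∘ v) x) = x := by
        intro x
        simp only [Function.comp_apply, sigmaFun_sigmaFun, hv, hw, hwv r]
      have hwb' : ∀ x, 1 ≤ x → x ≤ n → 1 ≤ (w ∘ sigmaFun a) x ∧ (w ∘ sigmaFun a) x ≤ n := by
        intro x hx1 hx2
        have := sigmaFun_bounds (n := n) hla.1 hla.2 hx1 hx2
        exact hwb r _ this.1 this.2
      have e1 : sigmaFun a a = a + 1 := by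
        simp only [sigmaFun]; split_ifs <;> omega
      have e2 : sigmaFun a (a + 1) = a := by
        simp only [sigmaFun]; split_ifs <;> omega
      have hasc' : (w ∘ sigmaFun a) a < (w ∘ sigmaFun a) (a + 1) := by
        simp only [Function.comp_apply, e1, e2]
        exact hdesc
      obtain ⟨h1, h2⟩ := InvSet_step hvw' hwv' hwb' hla.1 (by omega) hasc'
      have hveq : sigmaFun a ∘ (sigmaFun a ∘ v) = v := by
        funext x
        simp only [Function.comp_apply, sigmaFun_sigmaFun]
      rw [hveq] at h2
      rw [hc]
      simp only
      rw [vtake_succ hr, ← hv, ← ha, h2, Finset.card_insert_of_notMem h1]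
  have hstep_le : ∀ r < N, c (r + 1) ≤ c r + 1 := by
    intro r hr
    rcases dich r hr with ⟨_, _, _, h⟩ | h <;> omega
  have c0 : c 0 = 0 := by
    rw [hc]
    simp only [List.take_zero, List.reverse_nil, wordPerm_nil, InvSet_id, Finset.card_empty]
  have cN : c N = N := by
    rw [hc]
    simp only [hN, List.take_length]
    have hvb : ∀ x, 1 ≤ x → x ≤ n → 1 ≤ wordPerm l.reverse x ∧ wordPerm l.reverse x ≤ n := by
      intro x hx1 hx2
      exact wordPerm_bounds (fun j hj => hmem j (List.mem_reverse.mp hj)) hn hx1 hx2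
    have : ∀ x, 1 ≤ x → x ≤ n → wordPerm l.reverse x = n + 1 - x := by
      intro x hx1 hx2
      have hb := hvb x hx1 hx2
      have := hperm _ hb.1 hb.2
      rw [wordPerm_apply_reverse] at this
      omega
    rw [InvSet_full this, pairsSet_card, ← hlen]
  have upper : ∀ r ≤ N, c r ≤ r := by
    intro r
    induction r with
    | zero => intro _; omega
    | succ s ih =>
        intro hs
        have := hstep_le s (by omega)
        have := ih (by omega)
        omega
  have lower : ∀ m r, r + m = N → c N ≤ c r + m := by
    intro m
    induction m with
    | zero =>
        intro r hr
        have : r = N := by omega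
        rw [this]
        omega
    | succ s ih =>
        intro r hr
        have h1 := ih (r + 1) (by omega)
        have h2 := hstep_le r (by omega)
        omega
  have ceq : ∀ r ≤ N, c r = r := by
    intro r hr
    have h1 := upper r hr
    have h2 := lower (N - r) r (by omega)
    omega
  intro r hr
  rcases dich r hr with ⟨h1, h2, h3, _⟩ | h
  · exact ⟨h1, h2, h3⟩
  · have e1 := ceq r (by omega)
    have e2 := ceq (r + 1) (by omega)
    omega

/-! ### Root sequence corollaries -/

lemma rootSeq_eq {n : ℕ} (hn : 2 ≤ n) {l : List ℕ} (hl : IsReducedWord n l)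
    {r : ℕ} (hr : r < l.length) :
    rootSeq l (r + 1) =
      (wordPerm (l.take r) (l.getD r 0), wordPerm (l.take r) (l.getD r 0 + 1)) := by
  have h := (reduced_chain hn hl r hr).1
  simp only [rootSeq, Nat.add_sub_cancel]
  rw [min_eq_left (le_of_lt h), max_eq_right (le_of_lt h)]

lemma InvSet_mono {n : ℕ} (hn : 2 ≤ n) {l : List ℕ} (hl : IsReducedWord n l)
    {r s : ℕ} (hrs : r ≤ s) (hs : s ≤ l.length) :
    InvSet n (wordPerm ((l.take r).reverse)) ⊆ InvSet n (wordPerm ((l.take s).reverse)) := by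
  obtain ⟨d, rfl⟩ := Nat.exists_eq_add_of_le hrs
  clear hrs
  induction d with
  | zero => exact subset_rfl
  | succ e ih =>
      have h1 : r + e < l.length := by omega
      have h2 := (reduced_chain hn hl (r + e) h1).2.2
      have : r + (e + 1) = (r + e) + 1 := by omega
      rw [this, h2]
      exact (ih (by omega)).trans (Finset.subset_insert _ _)

lemma rootSeq_mem_InvSet {n : ℕ} (hn : 2 ≤ n) {l : List ℕ} (hl : IsReducedWord n l)
    {r : ℕ} (hr : r < l.length) :
    rootSeq l (r + 1) ∈ InvSet n (wordPerm ((l.take (r + 1)).reverse)) := by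
  rw [rootSeq_eq hn hl hr, (reduced_chain hn hl r hr).2.2]
  exact Finset.mem_insert_self _ _

lemma rootSeq_not_mem_InvSet {n : ℕ} (hn : 2 ≤ n) {l : List ℕ} (hl : IsReducedWord n l)
    {r : ℕ} (hr : r < l.length) :
    rootSeq l (r + 1) ∉ InvSet n (wordPerm ((l.take r).reverse)) := by
  rw [rootSeq_eq hn hl hr]
  exact (reduced_chain hn hl r hr).2.1

lemma rootSeq_bounds {n : ℕ} (hn : 2 ≤ n) {l : List ℕ} (hl : IsReducedWord n l)
    {r : ℕ} (hr : r < l.length) :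
    1 ≤ (rootSeq l (r + 1)).1 ∧ (rootSeq l (r + 1)).1 < (rootSeq l (r + 1)).2 ∧
      (rootSeq l (r + 1)).2 ≤ n := by
  have h := InvSet_subset_pairsSet n _ (rootSeq_mem_InvSet hn hl hr)
  rw [mem_pairsSet] at h
  exact ⟨h.1.1, h.2.2, h.2.1.2⟩

lemma rootSeq_injective {n : ℕ} (hn : 2 ≤ n) {l : List ℕ} (hl : IsReducedWord n l)
    {r s : ℕ} (hrs : r < s) (hs : s < l.length) :
    rootSeq l (r + 1) ≠ rootSeq l (s + 1) := by
  intro h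
  have h1 := rootSeq_mem_InvSet hn hl (show r < l.length by omega)
  have h2 := rootSeq_not_mem_InvSet hn hl hs
  rw [← h] at h2
  exact h2 (InvSet_mono hn hl (show r + 1 ≤ s by omega) (by omega) h1)

/-! ### Matrix expansion lemmas and the braid identity for `yMat` -/

lemma yMat_eq_std {n i : ℕ} (h1 : 1 ≤ i) (h2 : i < n) (z : K) :
    yMat n i z = 1 + Matrix.single (⟨i, h2⟩ : Fin n) (⟨i - 1, by omega⟩ : Fin n) z := by
  ext a b
  rw [Matrix.add_apply, Matrix.one_apply]
  simp only [yMat, Matrix.of_apply, Matrix.single, Fin.ext_iff]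
  split_ifs <;> first | (exfalso; omega) | simp

lemma expand3L {n : ℕ} (E F : Matrix (Fin n) (Fin n) K) (p q r : K)
    (hEE : E * E = 0) (hEF : E * F = 0) (hFF : F * F = 0) :
    (1 + p • E) * (1 + q • F) * (1 + r • E) =
      1 + (p + r) • E + q • F + (q * r) • (F * E) := by
  have h3 : E * F * E = 0 := by rw [hEF, zero_mul]
  simp only [mul_add, add_mul, one_mul, mul_one, smul_mul_assoc, mul_smul_comm,
    hEE, hEF, hFF, h3, smul_zero, add_zero, zero_add, add_smul, smul_add, smul_smul]
  module

lemma expand3R {n : ℕ} (E F : Matrix (Fin n) (Fin n) K) (x y z : K)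
    (hEE : E * E = 0) (hEF : E * F = 0) (hFF : F * F = 0) (hFEF : F * E * F = 0) :
    (1 + x • F) * (1 + y • E) * (1 + z • F) =
      1 + (x + z) • F + y • E + (x * y) • (F * E) := by
  simp only [mul_add, add_mul, one_mul, mul_one, smul_mul_assoc, mul_smul_comm,
    hEE, hEF, hFF, hFEF, smul_zero, add_zero, zero_add, add_smul, smul_add, smul_smul]
  module

lemma yMat_eq_smul {n i : ℕ} (h1 : 1 ≤ i) (h2 : i < n) (z : K) :
    yMat n i z = 1 + z • Matrix.single (⟨i, h2⟩ : Fin n) (⟨i - 1, by omega⟩ : Fin n)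
      (1 : K) := by
  rw [yMat_eq_std h1 h2, Matrix.smul_single, smul_eq_mul, mul_one]

lemma yMat_braid {n c e : ℕ} (hn : 2 ≤ n) (hc1 : 1 ≤ c) (hc2 : c ≤ n - 1)
    (he1 : 1 ≤ e) (he2 : e ≤ n - 1) (hce : c + 1 = e ∨ e + 1 = c)
    (p q r : K) (hpr : p + r ≠ 0) :
    yMat n c p * yMat n e q * yMat n c r =
      yMat n e (q * r / (p + r)) * yMat n c (p + r) * yMat n e (p * q / (p + r)) := by
  have hcn : c < n := by omega
  have hen : e < n := by omega
  have k1 : q * r / (p + r) + p * q / (p + r) = q := by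
    field_simp
    ring
  have k2 : q * r / (p + r) * (p + r) = q * r := div_mul_cancel₀ _ hpr
  have k3 : (p + r) * (p * q / (p + r)) = p * q := mul_div_cancel₀ _ hpr
  set E := Matrix.single (⟨c, hcn⟩ : Fin n) (⟨c - 1, by omega⟩ : Fin n) (1 : K) with hE
  set F := Matrix.single (⟨e, hen⟩ : Fin n) (⟨e - 1, by omega⟩ : Fin n) (1 : K) with hF
  rw [yMat_eq_smul hc1 hcn p, yMat_eq_smul he1 hen q, yMat_eq_smul hc1 hcn r,
    yMat_eq_smul he1 hen (q * r / (p + r)), yMat_eq_smul hc1 hcn (p + r),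
    yMat_eq_smul he1 hen (p * q / (p + r)), ← hE, ← hF]
  have hEE : E * E = 0 := by
    rw [hE]
    exact Matrix.single_mul_single_of_ne _ _ _ _ (Fin.ne_of_val_ne (by simp; omega)) _
  have hFF : F * F = 0 := by
    rw [hF]
    exact Matrix.single_mul_single_of_ne _ _ _ _ (Fin.ne_of_val_ne (by simp; omega)) _
  rcases hce with h | h
  · -- e = c + 1
    have hEF : E * F = 0 := by
      rw [hE, hF]
      exact Matrix.single_mul_single_of_ne _ _ _ _ (Fin.ne_of_val_ne (by simp; omega)) _
    have hFE : F * E = Matrix.single (⟨e, hen⟩ : Fin n) (⟨c - 1, by omega⟩ : Fin n)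
        (1 : K) := by
      rw [hE, hF]
      have he : (⟨e - 1, by omega⟩ : Fin n) = (⟨c, hcn⟩ : Fin n) := by
        simp only [Fin.ext_iff]; omega
      rw [he, Matrix.single_mul_single_same, mul_one]
    have hFEF : F * E * F = 0 := by
      rw [hFE, hF]
      exact Matrix.single_mul_single_of_ne _ _ _ _ (Fin.ne_of_val_ne (by simp; omega)) _
    rw [expand3L E F p q r hEE hEF hFF, expand3R E F _ _ _ hEE hEF hFF hFEF]
    rw [k1, k2]
    module
  · -- c = e + 1
    have hFE : F * E = 0 := by
      rw [hE, hF]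
      exact Matrix.single_mul_single_of_ne _ _ _ _ (Fin.ne_of_val_ne (by simp; omega)) _
    have hEF : E * F = Matrix.single (⟨c, hcn⟩ : Fin n) (⟨e - 1, by omega⟩ : Fin n)
        (1 : K) := by
      rw [hE, hF]
      have hc : (⟨c - 1, by omega⟩ : Fin n) = (⟨e, hen⟩ : Fin n) := by
        simp only [Fin.ext_iff]; omega
      rw [hc, Matrix.single_mul_single_same, mul_one]
    have hEFE : E * F * E = 0 := by
      rw [hEF, hE]
      exact Matrix.single_mul_single_of_ne _ _ _ _ (Fin.ne_of_val_ne (by simp; omega)) _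
    rw [expand3R F E p q r hFF hFE hEE hEFE, expand3L F E _ _ _ hFF hFE hEE]
    rw [k1, k3]
    module

/-! ### Window root computations -/

lemma sigmaFun_self (i : ℕ) : sigmaFun i i = i + 1 := by simp [sigmaFun]

lemma sigmaFun_succ (i : ℕ) : sigmaFun i (i + 1) = i := by
  simp only [sigmaFun]; split_ifs <;> omega

lemma sigmaFun_other {i x : ℕ} (h1 : x ≠ i) (h2 : x ≠ i + 1) : sigmaFun i x = x := by
  simp only [sigmaFun]; split_ifs <;> omega

set_option maxHeartbeats 1000000 in
lemma sigma_braid {c e : ℕ} (hce : c + 1 = e ∨ e + 1 = c) (x : ℕ) :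
    sigmaFun c (sigmaFun e (sigmaFun c x)) = sigmaFun e (sigmaFun c (sigmaFun e x)) := by
  rcases hce with h | h <;> subst h <;> simp only [sigmaFun] <;> split_ifs <;> omega

lemma take_eq_of_getD {l l' : List ℕ} {r : ℕ} (h1 : r ≤ l.length) (h2 : r ≤ l'.length)
    (h : ∀ s < r, l.getD s 0 = l'.getD s 0) : l.take r = l'.take r := by
  apply List.ext_getElem
  · simp only [List.length_take]; omega
  · intro s hs hs'
    simp only [List.length_take] at hs
    have hsr : s < r := by omega
    rw [List.getElem_take, List.getElem_take, ← List.getD_eq_getElem l 0 (by omega),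
      ← List.getD_eq_getElem l' 0 (by omega)]
    exact h s hsr

/-- Prefix permutations across a window with letters `(a₁, a₂, a₃)`
at (0-based) positions `k-2, k-1, k`. -/
lemma window_perms {l : List ℕ} {k a₁ a₂ a₃ : ℕ} (hk2 : 2 ≤ k) (hkN : k + 1 ≤ l.length)
    (h1 : l.getD (k - 2) 0 = a₁) (h2 : l.getD (k - 1) 0 = a₂) (h3 : l.getD k 0 = a₃) :
    wordPerm (l.take (k - 1)) = wordPerm (l.take (k - 2)) ∘ sigmaFun a₁ ∧
    wordPerm (l.take k) = wordPerm (l.take (k - 2)) ∘ sigmaFun a₁ ∘ sigmaFun a₂ ∧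
    wordPerm (l.take (k + 1)) =
      wordPerm (l.take (k - 2)) ∘ sigmaFun a₁ ∘ sigmaFun a₂ ∘ sigmaFun a₃ := by
  have e1 : k - 1 = (k - 2) + 1 := by omega
  have e2 : k = (k - 1) + 1 := by omega
  have w1 : wordPerm (l.take (k - 1)) = wordPerm (l.take (k - 2)) ∘ sigmaFun a₁ := by
    rw [e1, wtake_succ (by omega), h1]
  have w2 : wordPerm (l.take k) = wordPerm (l.take (k - 2)) ∘ sigmaFun a₁ ∘ sigmaFun a₂ := by
    conv_lhs => rw [e2, wtake_succ (by omega)]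
    rw [h2, w1, Function.comp_assoc]
  have w3 : wordPerm (l.take (k + 1)) =
      wordPerm (l.take (k - 2)) ∘ sigmaFun a₁ ∘ sigmaFun a₂ ∘ sigmaFun a₃ := by
    rw [wtake_succ (by omega), h3, w2, Function.comp_assoc, Function.comp_assoc]
  exact ⟨w1, w2, w3⟩

/-- Roots across a window with letters `(u, u+1, u)`. -/
lemma window_roots_A {l : List ℕ} {k u : ℕ} (hk2 : 2 ≤ k) (hkN : k + 1 ≤ l.length)
    (h1 : l.getD (k - 2) 0 = u) (h2 : l.getD (k - 1) 0 = u + 1) (h3 : l.getD k 0 = u)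
    (hxy : wordPerm (l.take (k - 2)) u < wordPerm (l.take (k - 2)) (u + 1))
    (hxz : wordPerm (l.take (k - 2)) u < wordPerm (l.take (k - 2)) (u + 2))
    (hyz : wordPerm (l.take (k - 2)) (u + 1) < wordPerm (l.take (k - 2)) (u + 2)) :
    rootSeq l (k - 1) = (wordPerm (l.take (k - 2)) u, wordPerm (l.take (k - 2)) (u + 1)) ∧
    rootSeq l k = (wordPerm (l.take (k - 2)) u, wordPerm (l.take (k - 2)) (u + 2)) ∧
    rootSeq l (k + 1) =
      (wordPerm (l.take (k - 2)) (u + 1), wordPerm (l.take (k - 2)) (u + 2)) := by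
  obtain ⟨w1, w2, w3⟩ := window_perms hk2 hkN h1 h2 h3
  have ek1 : k - 1 - 1 = k - 2 := by omega
  have ek2 : k + 1 - 1 = k := by omega
  have e22 : u + 1 + 1 = u + 2 := by omega
  refine ⟨?_, ?_, ?_⟩
  · simp only [rootSeq, ek1, h1]
    rw [min_eq_left (le_of_lt hxy), max_eq_right (le_of_lt hxy)]
  · simp only [rootSeq, h2, w1, Function.comp_apply]
    rw [sigmaFun_succ, e22,
      sigmaFun_other (show u + 2 ≠ u by omega) (show u + 2 ≠ u + 1 by omega)]
    rw [min_eq_left (le_of_lt hxz), max_eq_right (le_of_lt hxz)]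
  · simp only [rootSeq, ek2, h3, w2, Function.comp_apply]
    rw [sigmaFun_other (show u ≠ u + 1 by omega) (show u ≠ u + 1 + 1 by omega),
      sigmaFun_self u, sigmaFun_self (u + 1), e22,
      sigmaFun_other (show u + 2 ≠ u by omega) (show u + 2 ≠ u + 1 by omega)]
    rw [min_eq_left (le_of_lt hyz), max_eq_right (le_of_lt hyz)]

/-- Roots across a window with letters `(u+1, u, u+1)`. -/
lemma window_roots_B {l : List ℕ} {k u : ℕ} (hk2 : 2 ≤ k) (hkN : k + 1 ≤ l.length)
    (h1 : l.getD (k - 2) 0 = u + 1) (h2 : l.getD (k - 1) 0 = u) (h3 : l.getD k 0 = u + 1)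
    (hxy : wordPerm (l.take (k - 2)) u < wordPerm (l.take (k - 2)) (u + 1))
    (hxz : wordPerm (l.take (k - 2)) u < wordPerm (l.take (k - 2)) (u + 2))
    (hyz : wordPerm (l.take (k - 2)) (u + 1) < wordPerm (l.take (k - 2)) (u + 2)) :
    rootSeq l (k - 1) = (wordPerm (l.take (k - 2)) (u + 1), wordPerm (l.take (k - 2)) (u + 2)) ∧
    rootSeq l k = (wordPerm (l.take (k - 2)) u, wordPerm (l.take (k - 2)) (u + 2)) ∧
    rootSeq l (k + 1) =
      (wordPerm (l.take (k - 2)) u, wordPerm (l.take (k - 2)) (u + 1)) := by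
  obtain ⟨w1, w2, w3⟩ := window_perms hk2 hkN h1 h2 h3
  have ek1 : k - 1 - 1 = k - 2 := by omega
  have ek2 : k + 1 - 1 = k := by omega
  have e22 : u + 1 + 1 = u + 2 := by omega
  refine ⟨?_, ?_, ?_⟩
  · simp only [rootSeq, ek1, h1]
    rw [e22, min_eq_left (le_of_lt hyz), max_eq_right (le_of_lt hyz)]
  · simp only [rootSeq, h2, w1, Function.comp_apply]
    rw [sigmaFun_other (show u ≠ u + 1 by omega) (show u ≠ u + 1 + 1 by omega),
      sigmaFun_self (u + 1), e22]
    rw [min_eq_left (le_of_lt hxz), max_eq_right (le_of_lt hxz)]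
  · simp only [rootSeq, ek2, h3, w2, Function.comp_apply]
    rw [sigmaFun_succ u,
      sigmaFun_other (show u ≠ u + 1 by omega) (show u ≠ u + 1 + 1 by omega), e22,
      sigmaFun_other (show u + 2 ≠ u by omega) (show u + 2 ≠ u + 1 by omega),
      sigmaFun_succ (u + 1)]
    rw [min_eq_left (le_of_lt hxy), max_eq_right (le_of_lt hxy)]

set_option maxHeartbeats 1000000 in
theorem stmt15 (n : ℕ) (hn : 2 ≤ n) (i i' : List ℕ)
    (hi : IsReducedWord n i) (hi' : IsReducedWord n i')
    (k c e : ℕ) (hk2 : 2 ≤ k) (hkN : k + 1 ≤ n * (n - 1) / 2)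
    (hsame : ∀ r, 1 ≤ r → r ≤ n * (n - 1) / 2 → r ≠ k - 1 → r ≠ k → r ≠ k + 1 →
      i'.getD (r - 1) 0 = i.getD (r - 1) 0)
    (hce : c + 1 = e ∨ e + 1 = c)
    (hi1 : i.getD (k - 2) 0 = c) (hi2 : i.getD (k - 1) 0 = e) (hi3 : i.getD k 0 = c)
    (hi'1 : i'.getD (k - 2) 0 = e) (hi'2 : i'.getD (k - 1) 0 = c) (hi'3 : i'.getD k 0 = e)
    (m' m'' : ℕ × ℕ → K)
    (hm' : ∀ a b : ℕ, 1 ≤ a → a < b → b ≤ n → m' (a, b) ≠ 0)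
    (hsum : m' (rootSeq i (k - 1)) + m' (rootSeq i (k + 1)) ≠ 0)
    (h1 : m'' (rootSeq i (k - 1)) =
      m' (rootSeq i k) * (m' (rootSeq i (k - 1)) + m' (rootSeq i (k + 1)))
        / m' (rootSeq i (k + 1)))
    (h2 : m'' (rootSeq i k) =
      m' (rootSeq i (k - 1)) * m' (rootSeq i (k + 1))
        / (m' (rootSeq i (k - 1)) + m' (rootSeq i (k + 1))))
    (h3 : m'' (rootSeq i (k + 1)) =
      m' (rootSeq i k) * (m' (rootSeq i (k - 1)) + m' (rootSeq i (k + 1)))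
        / m' (rootSeq i (k - 1)))
    (hrest : ∀ ρ : ℕ × ℕ, 1 ≤ ρ.1 → ρ.1 < ρ.2 → ρ.2 ≤ n →
      ρ ≠ rootSeq i (k - 1) → ρ ≠ rootSeq i k → ρ ≠ rootSeq i (k + 1) →
      m'' ρ = m' ρ) :
    yProdRoots n i m' = yProdRoots n i' m'' ∧
      ∀ d : ℕ → K, (∀ j, 1 ≤ j → j ≤ n → d j ≠ 0) → tR n d m'' = tR n d m' := by
  classical
  have hleni : i.length = n * (n - 1) / 2 := hi.1
  have hleni' : i'.length = n * (n - 1) / 2 := hi'.1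
  have hkNi : k + 1 ≤ i.length := by omega
  have hkNi' : k + 1 ≤ i'.length := by omega
  -- letters bounds
  have hc1 : 1 ≤ c ∧ c ≤ n - 1 := by
    rw [← hi1]; exact hi.2.1 _ (getD_mem (by omega))
  have he1 : 1 ≤ e ∧ e ≤ n - 1 := by
    rw [← hi2]; exact hi.2.1 _ (getD_mem (by omega))
  -- prefix and suffix agreement
  have hpreD : ∀ s < k - 2, i'.getD s 0 = i.getD s 0 := by
    intro s hs
    have := hsame (s + 1) (by omega) (by omega) (by omega) (by omega) (by omega)
    simpa using this
  have hpre : i'.take (k - 2) = i.take (k - 2) := by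
    apply take_eq_of_getD (by omega) (by omega) hpreD
  have hsufD : ∀ s, k + 1 ≤ s → s < i.length → i'.getD s 0 = i.getD s 0 := by
    intro s hs1 hs2
    have := hsame (s + 1) (by omega) (by omega) (by omega) (by omega) (by omega)
    simpa using this
  have hdrop : i'.drop (k + 1) = i.drop (k + 1) := by
    apply List.ext_getElem (by simp; omega)
    intro s hs hs'
    rw [List.getElem_drop, List.getElem_drop,
      ← List.getD_eq_getElem i' 0 (by simp at hs; omega),
      ← List.getD_eq_getElem i 0 (by simp at hs'; omega)]
    exact hsufD (k + 1 + s) (by omega) (by simp at hs'; omega)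
  -- the key structural bundle
  obtain ⟨x, y, z, hx1, hxy, hyz, hzn, Rik, Rdisj, Y1, Y2, Y3⟩ :
      ∃ x y z : ℕ, 1 ≤ x ∧ x < y ∧ y < z ∧ z ≤ n ∧
        rootSeq i k = (x, z) ∧
        ((rootSeq i (k - 1) = (x, y) ∧ rootSeq i (k + 1) = (y, z)) ∨
         (rootSeq i (k - 1) = (y, z) ∧ rootSeq i (k + 1) = (x, y))) ∧
        rootSeq i' (k - 1) = rootSeq i (k + 1) ∧
        rootSeq i' k = rootSeq i k ∧
        rootSeq i' (k + 1) = rootSeq i (k - 1) := by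
    have hwb : ∀ t, 1 ≤ t → t ≤ n →
        1 ≤ wordPerm (i.take (k - 2)) t ∧ wordPerm (i.take (k - 2)) t ≤ n :=
      fun t ht1 ht2 =>
        wordPerm_bounds (fun j hj => hi.2.1 j (List.mem_of_mem_take hj)) hn ht1 ht2
    obtain ⟨w1, w2, w3⟩ := window_perms hk2 hkNi hi1 hi2 hi3
    have A0 := (reduced_chain hn hi (k - 2) (by omega)).1
    have A1 := (reduced_chain hn hi (k - 1) (by omega)).1
    have A2 := (reduced_chain hn hi k (by omega)).1
    rw [hi1] at A0
    rw [hi2, w1] at A1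
    rw [hi3, w2] at A2
    simp only [Function.comp_apply] at A1 A2
    rcases hce with h | h
    · -- e = c + 1
      subst h
      have e22 : c + 1 + 1 = c + 2 := by omega
      rw [sigmaFun_succ, e22,
        sigmaFun_other (show c + 2 ≠ c by omega) (show c + 2 ≠ c + 1 by omega)] at A1
      rw [sigmaFun_other (show c ≠ c + 1 by omega) (show c ≠ c + 1 + 1 by omega),
        sigmaFun_self c, sigmaFun_self (c + 1), e22,
        sigmaFun_other (show c + 2 ≠ c by omega) (show c + 2 ≠ c + 1 by omega)] at A2
      obtain ⟨Ri1, Ri2, Ri3⟩ := window_roots_A hk2 hkNi hi1 hi2 hi3 A0 A1 A2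
      obtain ⟨Ri'1, Ri'2, Ri'3⟩ := window_roots_B hk2 hkNi' hi'1 hi'2 hi'3
        (by rw [hpre]; exact A0) (by rw [hpre]; exact A1) (by rw [hpre]; exact A2)
      rw [hpre] at Ri'1 Ri'2 Ri'3
      exact ⟨wordPerm (i.take (k - 2)) c, wordPerm (i.take (k - 2)) (c + 1),
        wordPerm (i.take (k - 2)) (c + 2), (hwb c (by omega) (by omega)).1, A0, A2,
        (hwb (c + 2) (by omega) (by omega)).2, Ri2, Or.inl ⟨Ri1, Ri3⟩,
        by rw [Ri'1, Ri3], by rw [Ri'2, Ri2], by rw [Ri'3, Ri1]⟩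
    · -- c = e + 1
      subst h
      have e22 : e + 1 + 1 = e + 2 := by omega
      rw [e22] at A0
      rw [sigmaFun_other (show e ≠ e + 1 by omega) (show e ≠ e + 1 + 1 by omega),
        sigmaFun_self (e + 1), e22] at A1
      have hs1 : sigmaFun (e + 1) (e + 2) = e + 1 := by
        rw [show e + 2 = e + 1 + 1 by omega]
        exact sigmaFun_succ (e + 1)
      rw [sigmaFun_succ e,
        sigmaFun_other (show e ≠ e + 1 by omega) (show e ≠ e + 1 + 1 by omega), e22,
        sigmaFun_other (show e + 2 ≠ e by omega) (show e + 2 ≠ e + 1 by omega), hs1] at A2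
      obtain ⟨Ri1, Ri2, Ri3⟩ := window_roots_B hk2 hkNi hi1 hi2 hi3 A2 A1 A0
      obtain ⟨Ri'1, Ri'2, Ri'3⟩ := window_roots_A hk2 hkNi' hi'1 hi'2 hi'3
        (by rw [hpre]; exact A2) (by rw [hpre]; exact A1) (by rw [hpre]; exact A0)
      rw [hpre] at Ri'1 Ri'2 Ri'3
      exact ⟨wordPerm (i.take (k - 2)) e, wordPerm (i.take (k - 2)) (e + 1),
        wordPerm (i.take (k - 2)) (e + 2), (hwb e (by omega) (by omega)).1, A2, A0,
        (hwb (e + 2) (by omega) (by omega)).2, Ri2, Or.inr ⟨Ri1, Ri3⟩,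
        by rw [Ri'1, Ri3], by rw [Ri'2, Ri2], by rw [Ri'3, Ri1]⟩
  -- scalar facts
  have hAne : m' (x, y) ≠ 0 := hm' x y hx1 hxy (by omega)
  have hBne : m' (y, z) ≠ 0 := hm' y z (by omega) hyz hzn
  have hGne : m' (x, z) ≠ 0 := hm' x z hx1 (by omega) hzn
  have hS : m' (x, y) + m' (y, z) ≠ 0 := by
    rcases Rdisj with ⟨hα, hβ⟩ | ⟨hα, hβ⟩
    · rw [hα, hβ] at hsum; exact hsum
    · rw [hα, hβ] at hsum; rw [add_comm]; exact hsum
  have hxy'' : m'' (x, y) = m' (x, z) * (m' (x, y) + m' (y, z)) / m' (y, z) := by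
    rcases Rdisj with ⟨hα, hβ⟩ | ⟨hα, hβ⟩
    · rw [← hα, h1, hα, hβ, Rik]
    · rw [← hβ, h3, hα, hβ, Rik]; ring
  have hyz'' : m'' (y, z) = m' (x, z) * (m' (x, y) + m' (y, z)) / m' (x, y) := by
    rcases Rdisj with ⟨hα, hβ⟩ | ⟨hα, hβ⟩
    · rw [← hβ, h3, hα, hβ, Rik]
    · rw [← hα, h1, hα, hβ, Rik]; ring
  have hxz'' : m'' (x, z) = m' (x, y) * m' (y, z) / (m' (x, y) + m' (y, z)) := by
    rcases Rdisj with ⟨hα, hβ⟩ | ⟨hα, hβ⟩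
    · rw [← Rik, h2, hα, hβ]
    · rw [← Rik, h2, hα, hβ]; ring
  have R1 : m'' (x, y) * m'' (x, z) = m' (x, y) * m' (x, z) := by
    rw [hxy'', hxz'']; field_simp
  have R2 : m'' (x, z) * m'' (y, z) = m' (x, z) * m' (y, z) := by
    rw [hxz'', hyz'']; field_simp
  have R3 : m'' (x, y) * m' (y, z) = m' (x, y) * m'' (y, z) := by
    rw [hxy'', hyz'']; field_simp; try ring
  have hxy''ne : m'' (x, y) ≠ 0 := by
    rw [hxy'']; exact div_ne_zero (mul_ne_zero hGne hS) hBne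
  have hyz''ne : m'' (y, z) ≠ 0 := by
    rw [hyz'']; exact div_ne_zero (mul_ne_zero hGne hS) hAne
  have hxz''ne : m'' (x, z) ≠ 0 := by
    rw [hxz'']; exact div_ne_zero (mul_ne_zero hAne hBne) hS
  have hrest' : ∀ ρ : ℕ × ℕ, 1 ≤ ρ.1 → ρ.1 < ρ.2 → ρ.2 ≤ n →
      ρ ≠ (x, y) → ρ ≠ (y, z) → ρ ≠ (x, z) → m'' ρ = m' ρ := by
    intro ρ p1 p2 p3 q1 q2 q3
    rcases Rdisj with ⟨hα, hβ⟩ | ⟨hα, hβ⟩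
    · exact hrest ρ p1 p2 p3 (by rw [hα]; exact q1) (by rw [Rik]; exact q3)
        (by rw [hβ]; exact q2)
    · exact hrest ρ p1 p2 p3 (by rw [hα]; exact q2) (by rw [Rik]; exact q3)
        (by rw [hβ]; exact q1)
  have hm'' : ∀ a b : ℕ, 1 ≤ a → a < b → b ≤ n → m'' (a, b) ≠ 0 := by
    intro a b ha hab hbn
    by_cases e1 : (a, b) = ((x, y) : ℕ × ℕ)
    · rw [e1]; exact hxy''ne
    by_cases e2 : (a, b) = ((y, z) : ℕ × ℕ)
    · rw [e2]; exact hyz''ne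
    by_cases e3 : (a, b) = ((x, z) : ℕ × ℕ)
    · rw [e3]; exact hxz''ne
    rw [hrest' (a, b) ha hab hbn e1 e2 e3]
    exact hm' a b ha hab hbn
  -- the tR identity
  have tRmain : ∀ j : ℕ, 1 ≤ j → j ≤ n →
      (∏ l ∈ Finset.Icc 1 (j - 1), m'' (l, j)) * (∏ l ∈ Finset.Icc (j + 1) n, m' (j, l)) =
      (∏ l ∈ Finset.Icc 1 (j - 1), m' (l, j)) *
        (∏ l ∈ Finset.Icc (j + 1) n, m'' (j, l)) := by
    intro j hj1 hjn
    by_cases hjx : j = x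
    · subst hjx
      have hNum : (∏ l ∈ Finset.Icc 1 (j - 1), m'' (l, j)) =
          ∏ l ∈ Finset.Icc 1 (j - 1), m' (l, j) := by
        refine Finset.prod_congr rfl fun l hl => ?_
        rw [Finset.mem_Icc] at hl
        refine hrest' (l, j) (by omega) (by omega) (by omega) ?_ ?_ ?_ <;>
          · intro hh; rw [Prod.mk.injEq] at hh; omega
      have hyI : y ∈ Finset.Icc (j + 1) n := by rw [Finset.mem_Icc]; omega
      have hzI : z ∈ (Finset.Icc (j + 1) n).erase y := by
        simp only [Finset.mem_erase, Finset.mem_Icc]; omega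
      have hrestD : ∏ l ∈ ((Finset.Icc (j + 1) n).erase y).erase z, m'' (j, l) =
          ∏ l ∈ ((Finset.Icc (j + 1) n).erase y).erase z, m' (j, l) := by
        refine Finset.prod_congr rfl fun l hl => ?_
        simp only [Finset.mem_erase, Finset.mem_Icc] at hl
        refine hrest' (j, l) (by omega) (by omega) (by omega) ?_ ?_ ?_ <;>
          · intro hh; rw [Prod.mk.injEq] at hh; omega
      rw [hNum, ← Finset.mul_prod_erase _ _ hyI, ← Finset.mul_prod_erase _ _ hzI,
        ← Finset.mul_prod_erase _ (fun l => m'' (j, l)) hyI,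
        ← Finset.mul_prod_erase _ (fun l => m'' (j, l)) hzI, hrestD]
      rw [← mul_assoc (m' (j, y)), ← mul_assoc (m'' (j, y)), R1]
    · by_cases hjy : j = y
      · subst hjy
        have hxI : x ∈ Finset.Icc 1 (j - 1) := by rw [Finset.mem_Icc]; omega
        have hzI : z ∈ Finset.Icc (j + 1) n := by rw [Finset.mem_Icc]; omega
        have hrestN : ∏ l ∈ (Finset.Icc 1 (j - 1)).erase x, m'' (l, j) =
            ∏ l ∈ (Finset.Icc 1 (j - 1)).erase x, m' (l, j) := by
          refine Finset.prod_congr rfl fun l hl => ?_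
          simp only [Finset.mem_erase, Finset.mem_Icc] at hl
          refine hrest' (l, j) (by omega) (by omega) (by omega) ?_ ?_ ?_ <;>
            · intro hh; rw [Prod.mk.injEq] at hh; omega
        have hrestD : ∏ l ∈ (Finset.Icc (j + 1) n).erase z, m'' (j, l) =
            ∏ l ∈ (Finset.Icc (j + 1) n).erase z, m' (j, l) := by
          refine Finset.prod_congr rfl fun l hl => ?_
          simp only [Finset.mem_erase, Finset.mem_Icc] at hl
          refine hrest' (j, l) (by omega) (by omega) (by omega) ?_ ?_ ?_ <;>
            · intro hh; rw [Prod.mk.injEq] at hh; omega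
        rw [← Finset.mul_prod_erase _ (fun l => m'' (l, j)) hxI,
          ← Finset.mul_prod_erase _ (fun l => m' (l, j)) hxI,
          ← Finset.mul_prod_erase _ (fun l => m'' (j, l)) hzI,
          ← Finset.mul_prod_erase _ (fun l => m' (j, l)) hzI, hrestN, hrestD]
        linear_combination ((∏ l ∈ (Finset.Icc 1 (j - 1)).erase x, m' (l, j)) *
          (∏ l ∈ (Finset.Icc (j + 1) n).erase z, m' (j, l))) * R3
      · by_cases hjz : j = z
        · subst hjz
          have hxI : x ∈ Finset.Icc 1 (j - 1) := by rw [Finset.mem_Icc]; omega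
          have hyI : y ∈ (Finset.Icc 1 (j - 1)).erase x := by
            simp only [Finset.mem_erase, Finset.mem_Icc]; omega
          have hDen : (∏ l ∈ Finset.Icc (j + 1) n, m'' (j, l)) =
              ∏ l ∈ Finset.Icc (j + 1) n, m' (j, l) := by
            refine Finset.prod_congr rfl fun l hl => ?_
            rw [Finset.mem_Icc] at hl
            refine hrest' (j, l) (by omega) (by omega) (by omega) ?_ ?_ ?_ <;>
              · intro hh; rw [Prod.mk.injEq] at hh; omega
          have hrestN : ∏ l ∈ ((Finset.Icc 1 (j - 1)).erase x).erase y, m'' (l, j) =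
              ∏ l ∈ ((Finset.Icc 1 (j - 1)).erase x).erase y, m' (l, j) := by
            refine Finset.prod_congr rfl fun l hl => ?_
            simp only [Finset.mem_erase, Finset.mem_Icc] at hl
            refine hrest' (l, j) (by omega) (by omega) (by omega) ?_ ?_ ?_ <;>
              · intro hh; rw [Prod.mk.injEq] at hh; omega
          rw [hDen, ← Finset.mul_prod_erase _ (fun l => m'' (l, j)) hxI,
            ← Finset.mul_prod_erase _ (fun l => m'' (l, j)) hyI,
            ← Finset.mul_prod_erase _ (fun l => m' (l, j)) hxI,
            ← Finset.mul_prod_erase _ (fun l => m' (l, j)) hyI, hrestN]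
          linear_combination ((∏ l ∈ ((Finset.Icc 1 (j - 1)).erase x).erase y, m' (l, j)) *
            (∏ l ∈ Finset.Icc (j + 1) n, m' (j, l))) * R2
        · have hNum : (∏ l ∈ Finset.Icc 1 (j - 1), m'' (l, j)) =
              ∏ l ∈ Finset.Icc 1 (j - 1), m' (l, j) := by
            refine Finset.prod_congr rfl fun l hl => ?_
            rw [Finset.mem_Icc] at hl
            refine hrest' (l, j) (by omega) (by omega) (by omega) ?_ ?_ ?_ <;>
              · intro hh; rw [Prod.mk.injEq] at hh; omega
          have hDen : (∏ l ∈ Finset.Icc (j + 1) n, m'' (j, l)) =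
              ∏ l ∈ Finset.Icc (j + 1) n, m' (j, l) := by
            refine Finset.prod_congr rfl fun l hl => ?_
            rw [Finset.mem_Icc] at hl
            refine hrest' (j, l) (by omega) (by omega) (by omega) ?_ ?_ ?_ <;>
              · intro hh; rw [Prod.mk.injEq] at hh; omega
          rw [hNum, hDen]
  have htR : ∀ d : ℕ → K, (∀ j, 1 ≤ j → j ≤ n → d j ≠ 0) → tR n d m'' = tR n d m' := by
    intro d _hd
    unfold tR
    refine congrArg Matrix.diagonal (funext fun a0 => ?_)
    have ha0 : (a0 : ℕ) < n := a0.isLt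
    have hj1 : 1 ≤ n - (a0 : ℕ) := by omega
    have hjn : n - (a0 : ℕ) ≤ n := by omega
    have hne'' : (∏ l ∈ Finset.Icc (n - (a0 : ℕ) + 1) n, m'' (n - (a0 : ℕ), l)) ≠ 0 := by
      rw [Finset.prod_ne_zero_iff]
      intro l hl
      rw [Finset.mem_Icc] at hl
      exact hm'' _ _ hj1 (by omega) (by omega)
    have hne' : (∏ l ∈ Finset.Icc (n - (a0 : ℕ) + 1) n, m' (n - (a0 : ℕ), l)) ≠ 0 := by
      rw [Finset.prod_ne_zero_iff]
      intro l hl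
      rw [Finset.mem_Icc] at hl
      exact hm' _ _ hj1 (by omega) (by omega)
    rw [div_eq_div_iff hne'' hne']
    linear_combination d (n - (a0 : ℕ)) * tRmain (n - (a0 : ℕ)) hj1 hjn
  refine ⟨?_, htR⟩
  -- the product identity
  have ek1 : k - 1 = (k - 2) + 1 := by omega
  have ek2 : k = (k - 1) + 1 := by omega
  have hneq : ∀ r, r < i.length → ∀ s, s < i.length → r ≠ s →
      rootSeq i (r + 1) ≠ rootSeq i (s + 1) := by
    intro r hr s hs hrs
    rcases lt_or_gt_of_ne hrs with h | h
    · exact rootSeq_injective hn hi h hs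
    · exact (rootSeq_injective hn hi h hr).symm
  have houts : ∀ r, r < i.length → r ≠ k - 2 → r ≠ k - 1 → r ≠ k →
      m'' (rootSeq i (r + 1)) = m' (rootSeq i (r + 1)) := by
    intro r hr q1 q2 q3
    have hb := rootSeq_bounds hn hi hr
    refine hrest _ hb.1 hb.2.1 hb.2.2 ?_ ?_ ?_
    · rw [ek1]; exact hneq r hr (k - 2) (by omega) q1
    · rw [ek2]; exact hneq r hr (k - 1) (by omega) q2
    · exact hneq r hr k (by omega) q3
  have hroot_pre : ∀ r, r < k - 2 → rootSeq i' (r + 1) = rootSeq i (r + 1) := by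
    intro r hr
    have htk : i'.take r = i.take r :=
      take_eq_of_getD (by omega) (by omega) (fun s hs => hpreD s (by omega))
    have hgd : i'.getD r 0 = i.getD r 0 := hpreD r hr
    simp only [rootSeq, Nat.add_sub_cancel, htk, hgd]
  have hwtake : wordPerm (i'.take (k + 1)) = wordPerm (i.take (k + 1)) := by
    obtain ⟨_, _, w3⟩ := window_perms hk2 hkNi hi1 hi2 hi3
    obtain ⟨_, _, w3'⟩ := window_perms hk2 hkNi' hi'1 hi'2 hi'3
    rw [w3, w3', hpre]
    funext t
    simp only [Function.comp_apply]
    exact congrArg _ (sigma_braid hce t).symm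
  have hwtake_ge : ∀ r, k + 1 ≤ r → wordPerm (i'.take r) = wordPerm (i.take r) := by
    intro r hr
    have e : (k + 1) + (r - (k + 1)) = r := by omega
    conv_lhs => rw [← e, List.take_add]
    conv_rhs => rw [← e, List.take_add]
    rw [wordPerm_append, wordPerm_append, hwtake, hdrop]
  have hroot_suf : ∀ r, k + 1 ≤ r → r < i.length →
      rootSeq i' (r + 1) = rootSeq i (r + 1) := by
    intro r hr1 hr2
    have hgd : i'.getD r 0 = i.getD r 0 := hsufD r hr1 hr2
    simp only [rootSeq, Nat.add_sub_cancel, hwtake_ge r hr1, hgd]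
  -- scalars for the braid move
  have ha1 : m' (rootSeq i (k - 1)) ≠ 0 := by
    rcases Rdisj with ⟨hα, _⟩ | ⟨hα, _⟩ <;> rw [hα] <;> assumption
  have hb1 : m' (rootSeq i (k + 1)) ≠ 0 := by
    rcases Rdisj with ⟨_, hβ⟩ | ⟨_, hβ⟩ <;> rw [hβ] <;> assumption
  have hg1 : m' (rootSeq i k) ≠ 0 := by rw [Rik]; exact hGne
  have hh : (m' (rootSeq i (k - 1)))⁻¹ + (m' (rootSeq i (k + 1)))⁻¹ =
      (m' (rootSeq i (k - 1)) + m' (rootSeq i (k + 1))) /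
        (m' (rootSeq i (k - 1)) * m' (rootSeq i (k + 1))) := by
    field_simp
    ring
  have hpr : (m' (rootSeq i (k - 1)))⁻¹ + (m' (rootSeq i (k + 1)))⁻¹ ≠ 0 := by
    rw [hh]
    exact div_ne_zero hsum (mul_ne_zero ha1 hb1)
  have s1 : (m'' (rootSeq i (k + 1)))⁻¹ =
      (m' (rootSeq i k))⁻¹ * (m' (rootSeq i (k + 1)))⁻¹ /
        ((m' (rootSeq i (k - 1)))⁻¹ + (m' (rootSeq i (k + 1)))⁻¹) := by
    rw [h3, hh, inv_div]
    field_simp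
    try ring
  have s2 : (m'' (rootSeq i k))⁻¹ =
      (m' (rootSeq i (k - 1)))⁻¹ + (m' (rootSeq i (k + 1)))⁻¹ := by
    rw [h2, hh, inv_div]
  have s3 : (m'' (rootSeq i (k - 1)))⁻¹ =
      (m' (rootSeq i (k - 1)))⁻¹ * (m' (rootSeq i k))⁻¹ /
        ((m' (rootSeq i (k - 1)))⁻¹ + (m' (rootSeq i (k + 1)))⁻¹) := by
    rw [h1, hh, inv_div]
    field_simp
    try ring
  -- assemble
  have e1 : (k - 2) + 3 = k + 1 := by omega
  have e2 : (k + 1) + (n * (n - 1) / 2 - (k + 1)) = n * (n - 1) / 2 := by omega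
  have hsplit1 : List.range (n * (n - 1) / 2) =
      List.range (k + 1) ++
        (List.range (n * (n - 1) / 2 - (k + 1))).map (fun t => (k + 1) + t) := by
    conv_lhs => rw [← e2]
    exact List.range_add
  have hsplit2 : List.range (k + 1) =
      List.range (k - 2) ++ (List.range 3).map (fun t => (k - 2) + t) := by
    conv_lhs => rw [← e1]
    exact List.range_add
  unfold yProdRoots
  rw [hleni, hleni', hsplit1, hsplit2]
  simp only [List.map_append, List.prod_append]
  congr 1
  congr 1
  · -- head
    refine congrArg List.prod (List.map_congr_left fun r hr => ?_)
    rw [List.mem_range] at hr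
    rw [hpreD r hr, hroot_pre r hr, houts r (by omega) (by omega) (by omega) (by omega)]
  · -- middle window
    have hr3 : List.range 3 = [0, 1, 2] := by decide
    rw [hr3]
    simp only [List.map_cons, List.map_nil, List.prod_cons, List.prod_nil]
    simp only [show (k - 2) + 0 = k - 2 by omega, show (k - 2) + 1 = k - 1 by omega,
      show (k - 2) + 2 = k by omega, show (k - 1) + 1 = k by omega]
    rw [hi1, hi2, hi3, hi'1, hi'2, hi'3, Y1, Y2, Y3]
    rw [mul_one, mul_one, ← mul_assoc, ← mul_assoc]
    rw [yMat_braid hn hc1.1 hc1.2 he1.1 he1.2 hce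
      (m' (rootSeq i (k - 1)))⁻¹ (m' (rootSeq i k))⁻¹ (m' (rootSeq i (k + 1)))⁻¹ hpr]
    rw [s1, s2, s3]
  · -- tail
    refine congrArg List.prod ?_
    rw [List.map_map, List.map_map]
    refine List.map_congr_left fun t ht => ?_
    rw [List.mem_range] at ht
    simp only [Function.comp_apply]
    have hrr : k + 1 ≤ (k + 1) + t := by omega
    have hrl : (k + 1) + t < i.length := by omega
    rw [hsufD _ hrr hrl, hroot_suf _ hrr hrl,
      houts _ hrl (by omega) (by omega) (by omega)]
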